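/- Let p be a prime, k ≥ 1 an integer, and (s_d, ..., s_1) a tuple of positive integers. Then in ℚ (equivalently in ℚ_p), the multiple harmonic sum with upper bound p^k satisfies the reflection identity: H_{p^k}(s_d, ..., s_1) = (-1)^{s_1+...+s_d} * ∑_{l_d,...,l_1 ≥ 0} (∏_{i=1}^{d} C(l_i + s_i - 1, l_i) * (p^k)^{l_i}) * H_{p^k}(s_1 + l_1, ..., s_d + l_d), where the right-hand side is a convergent series in ℚ_p (only finitely many terms are nonzero for each p-adic valuation, and the series converges p-adically). -/

import Mathlib

/-- For `1 ≤ n < p^k`, the `p`-adic norm of `p^k / n` is `< 1`. -/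
lemma aux_norm_lt (p : ℕ) [hp : Fact p.Prime] (k : ℕ) (n : ℕ) (h1 : 1 ≤ n)
    (h2 : n < p ^ k) : ‖((p : ℚ_[p]) ^ k / (n : ℚ_[p]))‖ < 1 := by
  have hp0 : (0 : ℝ) < p := by exact_mod_cast hp.out.pos
  have hnorm : ¬ ‖((n : ℤ) : ℚ_[p])‖ ≤ (p : ℝ) ^ (-(k : ℤ)) := by
    rw [Padic.norm_int_le_pow_iff_dvd]
    intro hdvd
    have hle := Int.le_of_dvd (by exact_mod_cast h1) hdvd
    have : (p : ℤ) ^ k < (p : ℤ) ^ k := lt_of_le_of_lt hle (by exact_mod_cast h2)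
    exact absurd this (lt_irrefl _)
  push_neg at hnorm
  have hpkn : ‖(p : ℚ_[p]) ^ k‖ = (p : ℝ) ^ (-(k : ℤ)) := by
    rw [norm_pow, Padic.norm_p, zpow_neg, zpow_natCast, inv_pow]
  have hcast : ((n : ℤ) : ℚ_[p]) = (n : ℚ_[p]) := by push_cast; ring
  rw [hcast] at hnorm
  rw [norm_div, div_lt_one (lt_of_le_of_lt (zpow_pos hp0 _).le hnorm), hpkn]
  exact hnorm

/-- Reflection identity for depth-one multiple harmonic sums, `p`-adically:
for `p` prime, `k ≥ 1`, `s ≥ 1`, the series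
`∑_{l≥0} C(l+s-1, l) p^{kl} H_{p^k}(s+l)` converges in `ℚ_p` with sum
`(-1)^s · H_{p^k}(s)`, where `H_N(s) = ∑_{0<n<N} 1/n^s ∈ ℚ`. -/
theorem stmt_5 (p : ℕ) [hp : Fact p.Prime] (k : ℕ) (hk : 1 ≤ k) (s : ℕ) (hs : 1 ≤ s)
    (H : ℕ → ℕ → ℚ)
    (hH : ∀ N a, H N a = ∑ n ∈ Finset.Ico 1 N, 1 / (n : ℚ) ^ a) :
    HasSum
      (fun l : ℕ =>
        (Nat.choose (l + s - 1) l : ℚ_[p]) * (p : ℚ_[p]) ^ (k * l) * ((H (p ^ k) (s + l) : ℚ) : ℚ_[p]))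
      ((-1 : ℚ_[p]) ^ s * ((H (p ^ k) s : ℚ) : ℚ_[p])) := by
  obtain ⟨m, rfl⟩ : ∃ m, s = m + 1 := ⟨s - 1, by omega⟩
  set N := p ^ k with hN
  have key : ∀ n ∈ Finset.Ico 1 N, HasSum
      (fun l : ℕ => (Nat.choose (l + (m + 1) - 1) l : ℚ_[p]) * (p : ℚ_[p]) ^ (k * l) *
        (1 / (n : ℚ_[p]) ^ (m + 1 + l)))
      ((-1 : ℚ_[p]) ^ (m + 1) * (1 / ((N - n : ℕ) : ℚ_[p]) ^ (m + 1))) := by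
    intro n hn
    rw [Finset.mem_Ico] at hn
    obtain ⟨h1, h2⟩ := hn
    have hn0 : (n : ℚ_[p]) ≠ 0 := Nat.cast_ne_zero.mpr (by omega)
    have hne : (n : ℚ_[p]) ≠ (N : ℚ_[p]) := by
      intro h; exact absurd (Nat.cast_injective h) (by omega)
    have hr : ‖((p : ℚ_[p]) ^ k / (n : ℚ_[p]))‖ < 1 := aux_norm_lt p k n h1 h2
    have base := hasSum_choose_mul_geometric_of_norm_lt_one (𝕜 := ℚ_[p]) m hr
    have base2 := base.mul_left (1 / (n : ℚ_[p]) ^ (m + 1))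
    have hsub : ((N - n : ℕ) : ℚ_[p]) = (N : ℚ_[p]) - (n : ℚ_[p]) := by
      push_cast [Nat.cast_sub h2.le]; ring
    have hNd : (N : ℚ_[p]) - (n : ℚ_[p]) ≠ 0 := sub_ne_zero.mpr (fun h => hne h.symm)
    have hX0 : ((N - n : ℕ) : ℚ_[p]) ≠ 0 := by rw [hsub]; exact hNd
    have hNc : (N : ℚ_[p]) = (p : ℚ_[p]) ^ k := by rw [hN]; push_cast; ring
    -- termwise equality of the functions
    have hfun_n : (fun l : ℕ => (Nat.choose (l + (m + 1) - 1) l : ℚ_[p]) * (p : ℚ_[p]) ^ (k * l) *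
        (1 / (n : ℚ_[p]) ^ (m + 1 + l)))
        = (fun l : ℕ => 1 / (n : ℚ_[p]) ^ (m + 1) *
          ((Nat.choose (l + m) m : ℚ_[p]) * ((p : ℚ_[p]) ^ k / (n : ℚ_[p])) ^ l)) := by
      funext l
      have hch : (l + (m + 1) - 1).choose l = (l + m).choose m := by
        have h1 : l + (m + 1) - 1 = l + m := by omega
        rw [h1]
        have := Nat.choose_symm (n := l + m) (k := m) (Nat.le_add_left m l)
        simpa using this
      rw [hch, div_pow, pow_mul]
      ring
    -- equality of the sums
    have hval : ((-1 : ℚ_[p]) ^ (m + 1) * (1 / ((N - n : ℕ) : ℚ_[p]) ^ (m + 1)))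
        = 1 / (n : ℚ_[p]) ^ (m + 1) * (1 / (1 - (p : ℚ_[p]) ^ k / (n : ℚ_[p])) ^ (m + 1)) := by
      have h1r : 1 - (p : ℚ_[p]) ^ k / (n : ℚ_[p])
          = -(((N - n : ℕ) : ℚ_[p]) / (n : ℚ_[p])) := by
        rw [hsub, hNc]; field_simp; ring
      set c : ℚ_[p] := (-1 : ℚ_[p]) ^ (m + 1) with hc
      have hc2 : c * c = 1 := by
        rw [hc, ← mul_pow]; norm_num
      have hcinv : c⁻¹ = c := inv_eq_of_mul_eq_one_right hc2
      rw [h1r, neg_pow, div_pow, ← hc, one_div, one_div, one_div]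
      rw [mul_inv, hcinv, inv_div]
      field_simp
    rw [hfun_n, hval]
    exact base2
  have total := hasSum_sum key
  have hfun : (fun l : ℕ =>
      (Nat.choose (l + (m + 1) - 1) l : ℚ_[p]) * (p : ℚ_[p]) ^ (k * l) *
        ((H (p ^ k) (m + 1 + l) : ℚ) : ℚ_[p]))
      = fun l : ℕ => ∑ n ∈ Finset.Ico 1 N,
        (Nat.choose (l + (m + 1) - 1) l : ℚ_[p]) * (p : ℚ_[p]) ^ (k * l) *
          (1 / (n : ℚ_[p]) ^ (m + 1 + l)) := by
    funext l
    rw [hH, ← hN]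
    push_cast
    rw [Finset.mul_sum]
  have htarget : ((-1 : ℚ_[p]) ^ (m + 1) * ((H (p ^ k) (m + 1) : ℚ) : ℚ_[p]))
      = ∑ n ∈ Finset.Ico 1 N,
        (-1 : ℚ_[p]) ^ (m + 1) * (1 / ((N - n : ℕ) : ℚ_[p]) ^ (m + 1)) := by
    rw [hH, ← hN]
    push_cast
    rw [Finset.mul_sum]
    apply Finset.sum_nbij' (i := fun n => N - n) (j := fun n => N - n)
    · intro a ha; rw [Finset.mem_Ico] at *; omega
    · intro a ha; rw [Finset.mem_Ico] at *; omega
    · intro a ha; rw [Finset.mem_Ico] at ha; omega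
    · intro a ha; rw [Finset.mem_Ico] at ha; omega
    · intro a ha; rw [Finset.mem_Ico] at ha
      have h3 : N - (N - a) = a := by omega
      rw [h3]
  rw [hfun, htarget]
  exact total
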